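/- Causal Fisher-information inequality for a classical causal path, finite-outcome version (Supplementary Theorem S5): Let C and B be finite nonempty types. Let α : ℝ → C → ℝ satisfy α θ₁ c > 0 for all c, ∑_c α t c = 1 for all t, with each t ↦ α t c differentiable at θ₁; let β : ℝ → C → B → ℝ satisfy β θ₂ c b > 0 for all c, b, ∑_b β t c b = 1 for all t and c, with each t ↦ β t c b differentiable at θ₂. Define F_ac = ∑_c (d/dt α t c |_{θ₁})² / α θ₁ c and F_cb = ∑_c α θ₁ c · ∑_b (d/dt β t c b |_{θ₂})² / β θ₂ c b, and assume F_ac > 0 and F_cb > 0. Define the endpoint marginal p b (t₁, t₂) = ∑_c α t₁ c · β t₂ c b, its partial derivatives ∂₁p b = ∑_c (d/dt α t c |_{θ₁}) · β θ₂ c b and ∂₂p b = ∑_c α θ₁ c · (d/dt β t c b |_{θ₂}), and the 2×2 endpoint Fisher matrix M with M_{ij} = ∑_b (∂_i p b)(∂_j p b) / p b (θ₁, θ₂), assumed positive definite. Then with u = (1,1)ᵀ, uᵀ M⁻¹ u ≥ 1/F_ac + 1/F_cb; that is, the effective endpoint Fisher information F_ab^{(B)} := (uᵀ M⁻¹ u)⁻¹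 for the additive parameter θ_ab = θ_ac + θ_cb satisfies (F_ab^{(B)})⁻¹ ≥ F_ac⁻¹ + F_cb⁻¹. -/

import Mathlib

open Matrix

set_option maxHeartbeats 1000000 in
/-- Causal Fisher-information inequality for a classical causal path,
finite-outcome version (Supplementary Theorem S5): the effective endpoint Fisher
information for the additive parameter obeys the series law
`(F_ab^{(B)})⁻¹ ≥ F_ac⁻¹ + F_cb⁻¹`. -/
theorem causal_path_CFII_finite
    {C B : Type*} [Fintype C] [Nonempty C] [Fintype B] [Nonempty B]
    (θ₁ θ₂ : ℝ)
    (α : ℝ → C → ℝ)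
    (hα_pos : ∀ c, 0 < α θ₁ c)
    (hα_sum : ∀ t, ∑ c, α t c = 1)
    (hα_diff : ∀ c, DifferentiableAt ℝ (fun t => α t c) θ₁)
    (β : ℝ → C → B → ℝ)
    (hβ_pos : ∀ c b, 0 < β θ₂ c b)
    (hβ_sum : ∀ t c, ∑ b, β t c b = 1)
    (hβ_diff : ∀ c b, DifferentiableAt ℝ (fun t => β t c b) θ₂)
    (Fac Fcb : ℝ)
    (hFac : Fac = ∑ c, (deriv (fun t => α t c) θ₁) ^ 2 / α θ₁ c)
    (hFcb : Fcb = ∑ c, α θ₁ c * ∑ b, (deriv (fun t => β t c b) θ₂) ^ 2 / β θ₂ c b)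
    (hFac_pos : 0 < Fac) (hFcb_pos : 0 < Fcb)
    (dp : Fin 2 → B → ℝ)
    (hdp0 : ∀ b, dp 0 b = ∑ c, (deriv (fun t => α t c) θ₁) * β θ₂ c b)
    (hdp1 : ∀ b, dp 1 b = ∑ c, α θ₁ c * (deriv (fun t => β t c b) θ₂))
    (M : Matrix (Fin 2) (Fin 2) ℝ)
    (hM : ∀ i j, M i j = ∑ b, dp i b * dp j b / (∑ c, α θ₁ c * β θ₂ c b))
    (hMpd : M.PosDef) :
    (![1, 1] : Fin 2 → ℝ) ⬝ᵥ (M⁻¹ *ᵥ ![1, 1]) ≥ 1 / Fac + 1 / Fcb := by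
  set A : C → ℝ := fun c => α θ₁ c with hA
  set A' : C → ℝ := fun c => deriv (fun t => α t c) θ₁ with hA'
  set Bb : C → B → ℝ := fun c b => β θ₂ c b with hBb
  set B' : C → B → ℝ := fun c b => deriv (fun t => β t c b) θ₂ with hB'
  set x := 1 / Fac with hx
  set y := 1 / Fcb with hy
  have hxpos : 0 < x := by positivity
  have hypos : 0 < y := by positivity
  have hp : ∀ b, 0 < ∑ c, α θ₁ c * β θ₂ c b := fun b =>
    Finset.sum_pos (fun c _ => mul_pos (hα_pos c) (hβ_pos c b)) Finset.univ_nonempty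
  -- sum of derivatives of β over b is zero
  have hβ'sum : ∀ c, ∑ b, B' c b = 0 := by
    intro c
    have h1 : deriv (fun t => ∑ b, β t c b) θ₂ = ∑ b, B' c b :=
      deriv_fun_sum (fun b _ => hβ_diff c b)
    have h2 : (fun t => ∑ b, β t c b) = fun _ : ℝ => (1 : ℝ) := funext fun t => hβ_sum t c
    rw [h2, deriv_const] at h1
    exact h1.symm
  -- the quadratic form value
  set Q := x ^ 2 * M 0 0 + 2 * x * y * M 0 1 + y ^ 2 * M 1 1 with hQdef
  have hQeq : Q = ∑ b, (x * dp 0 b + y * dp 1 b) ^ 2 / (∑ c, α θ₁ c * β θ₂ c b) := by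
    rw [hQdef, hM 0 0, hM 0 1, hM 1 1, Finset.mul_sum, Finset.mul_sum, Finset.mul_sum,
      ← Finset.sum_add_distrib, ← Finset.sum_add_distrib]
    refine Finset.sum_congr rfl fun b _ => ?_
    have hpb := (hp b).ne'
    field_simp
    ring
  -- Cauchy–Schwarz (Engel form) per outcome b
  have hEngel : ∀ b, (x * dp 0 b + y * dp 1 b) ^ 2 / (∑ c, α θ₁ c * β θ₂ c b)
      ≤ ∑ c, (x * A' c * Bb c b + y * A c * B' c b) ^ 2 / (A c * Bb c b) := by
    intro b
    have hnum : x * dp 0 b + y * dp 1 b = ∑ c, (x * A' c * Bb c b + y * A c * B' c b) := by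
      rw [hdp0 b, hdp1 b, Finset.mul_sum, Finset.mul_sum, ← Finset.sum_add_distrib]
      exact Finset.sum_congr rfl fun c _ => by ring
    rw [hnum]
    exact Finset.sq_sum_div_le_sum_sq_div _ _ (fun c _ => mul_pos (hα_pos c) (hβ_pos c b))
  -- total sum equals x²Fac + y²Fcb
  have hsum : ∑ b, ∑ c, (x * A' c * Bb c b + y * A c * B' c b) ^ 2 / (A c * Bb c b)
      = x ^ 2 * Fac + y ^ 2 * Fcb := by
    rw [Finset.sum_comm, hFac, hFcb, Finset.mul_sum, Finset.mul_sum, ← Finset.sum_add_distrib]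
    refine Finset.sum_congr rfl fun c _ => ?_
    have hterm : ∀ b, (x * A' c * Bb c b + y * A c * B' c b) ^ 2 / (A c * Bb c b)
        = x ^ 2 * (A' c ^ 2 / A c) * Bb c b + 2 * x * y * A' c * B' c b
          + y ^ 2 * A c * (B' c b ^ 2 / Bb c b) := by
      intro b
      have h1 : A c ≠ 0 := (hα_pos c).ne'
      have h2 : Bb c b ≠ 0 := (hβ_pos c b).ne'
      field_simp
      ring
    rw [Finset.sum_congr rfl fun b _ => hterm b, Finset.sum_add_distrib, Finset.sum_add_distrib,
      ← Finset.mul_sum, ← Finset.mul_sum, ← Finset.mul_sum]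
    have hb1 : ∑ b, Bb c b = 1 := hβ_sum θ₂ c
    rw [hb1, hβ'sum c]
    ring
  have hQle : Q ≤ x + y := by
    have h1 : Q ≤ ∑ b, ∑ c, (x * A' c * Bb c b + y * A c * B' c b) ^ 2 / (A c * Bb c b) := by
      rw [hQeq]; exact Finset.sum_le_sum fun b _ => hEngel b
    have h2 : x ^ 2 * Fac = x := by rw [hx]; field_simp
    have h3 : y ^ 2 * Fcb = y := by rw [hy]; field_simp
    rw [hsum, h2, h3] at h1
    exact h1
  -- matrix algebra
  have hsymm : M 1 0 = M 0 1 := by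
    rw [hM, hM]; exact Finset.sum_congr rfl fun b _ => by ring
  have hdet : M.det = M 0 0 * M 1 1 - M 0 1 * M 0 1 := by
    rw [Matrix.det_fin_two, hsymm]
  have hdetpos : 0 < M.det := hMpd.det_pos
  have hupos : 0 < M 0 0 - 2 * M 0 1 + M 1 1 := by
    have hw : (![1, -1] : Fin 2 → ℝ) ≠ 0 := by
      intro h
      have := congrFun h 0
      simp at this
    have := hMpd.dotProduct_mulVec_pos hw
    simp only [star_trivial, dotProduct, Matrix.mulVec, Fin.sum_univ_two,
      Matrix.cons_val_zero, Matrix.cons_val_one, Matrix.head_cons] at this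
    nlinarith [this, hsymm]
  -- compute the LHS
  have hLHS : (![1, 1] : Fin 2 → ℝ) ⬝ᵥ (M⁻¹ *ᵥ ![1, 1])
      = (M 0 0 - 2 * M 0 1 + M 1 1) / M.det := by
    rw [Matrix.inv_def, Matrix.adjugate_fin_two]
    simp only [Matrix.smul_mulVec, Matrix.mulVec, dotProduct, Fin.sum_univ_two,
      Matrix.cons_val_zero, Matrix.cons_val_one, Matrix.head_cons, Pi.smul_apply, Matrix.smul_apply, Matrix.of_apply,
      smul_eq_mul, Matrix.cons_val', Matrix.head_fin_const, Matrix.empty_val',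
      Matrix.cons_val_fin_one]
    rw [Ring.inverse_eq_inv', hsymm]
    field_simp
    ring
  rw [hLHS, ge_iff_le, show (1:ℝ)/Fac + 1/Fcb = x + y from rfl, le_div_iff₀ hdetpos]
  -- key algebraic inequality
  have hkey : (x + y) ^ 2 * M.det ≤ (M 0 0 - 2 * M 0 1 + M 1 1) * Q := by
    rw [hdet, hQdef]
    nlinarith [sq_nonneg ((M 0 0 - M 0 1) * x + (M 0 1 - M 1 1) * y)]
  have h2 : (M 0 0 - 2 * M 0 1 + M 1 1) * Q ≤ (M 0 0 - 2 * M 0 1 + M 1 1) * (x + y) :=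
    mul_le_mul_of_nonneg_left hQle hupos.le
  nlinarith [hkey.trans h2, add_pos hxpos hypos]
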